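/- Let A be an algebra over a field k with idempotents e₁, e₂ such that the multiplication maps A e_i ⊗_{e_i A e_i} e_i A → A e_i A are bijective for i = 1,2, and suppose we have a chain 0 ⊂ A e₂ A ⊂ A e₁ A ⊂ A with e₂ ∈ e₁ A e₁. Then localisation by e₁ followed by localisation by e₂ agrees with localisation by e₂: for any A-module M, e₂(e₁ M) = e₂ M as e₂ A e₂-modules. Dually, globalisation composes: A e₂ ⊗_{e₂ A e₂} N ≅ A e₁ ⊗_{e₁ A e₁} (e₁ A e₂ ⊗_{e₂ A e₂} N) for any e₂Ae₂-module N. -/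

import Mathlib

/-- The additive subgroup `eAe` of `A`. -/
def cornerSub {A : Type*} [Ring A] (e : A) : AddSubgroup A where
  carrier := {x | e * x = x ∧ x * e = x}
  zero_mem' := by simp
  add_mem' := by
    rintro a b ⟨h1, h2⟩ ⟨h3, h4⟩
    constructor <;> simp [mul_add, add_mul, h1, h2, h3, h4]
  neg_mem' := by
    rintro a ⟨h1, h2⟩
    constructor <;> simp [h1, h2]

/-- The corner ring `eAe` associated to an idempotent `e` of `A`. -/
def Corner {A : Type*} [Ring A] (e : A) (_he : e * e = e) : Type _ := cornerSub e

namespace Corner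

variable {A : Type*} [Ring A] {e : A} {he : e * e = e}

instance : AddCommGroup (Corner e he) := inferInstanceAs (AddCommGroup (cornerSub e))

lemma mem1 (x : Corner e he) : e * x.1 = x.1 := x.2.1
lemma mem2 (x : Corner e he) : x.1 * e = x.1 := x.2.2

instance : Mul (Corner e he) :=
  ⟨fun x y => ⟨x.1 * y.1, by rw [← mul_assoc, mem1], by rw [mul_assoc, mem2]⟩⟩

instance : One (Corner e he) := ⟨⟨e, he, he⟩⟩

@[simp] lemma mul_val (x y : Corner e he) : (x * y).1 = x.1 * y.1 := rfl
@[simp] lemma one_val : (1 : Corner e he).1 = e := rfl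
@[simp] lemma add_val (x y : Corner e he) : (x + y).1 = x.1 + y.1 := rfl
@[simp] lemma zero_val : (0 : Corner e he).1 = 0 := rfl

instance : Ring (Corner e he) := {
  (inferInstance : AddCommGroup (Corner e he)), (inferInstance : Mul (Corner e he)),
  (inferInstance : One (Corner e he)) with
  mul_assoc := fun x y z => Subtype.ext (mul_assoc x.1 y.1 z.1)
  one_mul := fun x => Subtype.ext (mem1 x)
  mul_one := fun x => Subtype.ext (mem2 x)
  left_distrib := fun x y z => Subtype.ext (mul_add x.1 y.1 z.1)
  right_distrib := fun x y z => Subtype.ext (add_mul x.1 y.1 z.1)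
  zero_mul := fun x => Subtype.ext (zero_mul x.1)
  mul_zero := fun x => Subtype.ext (mul_zero x.1) }

end Corner

/-- The additive subgroup `eM` of an `A`-module `M`. -/
def cornerModSub {A : Type*} [Ring A] (e : A) (M : Type*) [AddCommGroup M]
    [Module A M] : AddSubgroup M where
  carrier := {m | e • m = m}
  zero_mem' := by simp
  add_mem' := by
    intro a b h1 h2
    simp only [Set.mem_setOf_eq] at *
    rw [smul_add, h1, h2]
  neg_mem' := by
    intro a h
    simp only [Set.mem_setOf_eq] at *
    rw [smul_neg, h]

/-- The `eAe`-module `eM` associated to an `A`-module `M`. -/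
def CornerMod {A : Type*} [Ring A] (e : A) (he : e * e = e) (M : Type*) [AddCommGroup M]
    [Module A M] : Type _ := cornerModSub e M

namespace CornerMod

variable {A : Type*} [Ring A] {e : A} {he : e * e = e} {M : Type*} [AddCommGroup M] [Module A M]

instance : AddCommGroup (CornerMod e he M) := inferInstanceAs (AddCommGroup (cornerModSub e M))

lemma memMod (m : CornerMod e he M) : e • m.1 = m.1 := m.2

instance : SMul (Corner e he) (CornerMod e he M) :=
  ⟨fun x m => ⟨x.1 • m.1, show e • (x.1 • m.1) = x.1 • m.1 by
    rw [← mul_smul, Corner.mem1]⟩⟩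

@[simp] lemma smul_val (x : Corner e he) (m : CornerMod e he M) : (x • m).1 = x.1 • m.1 := rfl

instance : Module (Corner e he) (CornerMod e he M) where
  one_smul m := by apply Subtype.ext; show e • m.1 = m.1; exact m.2
  mul_smul x y m := by apply Subtype.ext; show (x.1 * y.1) • m.1 = x.1 • (y.1 • m.1); exact mul_smul _ _ _
  smul_zero x := by apply Subtype.ext; show x.1 • (0 : M) = 0; exact smul_zero _
  smul_add x m n := by apply Subtype.ext; show x.1 • (m.1 + n.1) = x.1 • m.1 + x.1 • n.1; exact smul_add _ _ _
  add_smul x y m := by apply Subtype.ext; show (x.1 + y.1) • m.1 = x.1 • m.1 + y.1 • m.1; exact add_smul _ _ _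
  zero_smul m := by apply Subtype.ext; show (0 : A) • m.1 = 0; exact zero_smul _ _

end CornerMod
section Bimod

variable {A : Type} [Ring A]

/-- The right module `Ae` as an additive subgroup of `A`. -/
def AeT (e : A) : AddSubgroup A where
  carrier := {x | x * e = x}
  zero_mem' := by simp
  add_mem' := by
    intro a b h1 h2; simp only [Set.mem_setOf_eq] at *; rw [add_mul, h1, h2]
  neg_mem' := by
    intro a h; simp only [Set.mem_setOf_eq] at *; rw [neg_mul, h]

lemma AeT.memAe {e : A} (x : AeT e) : x.1 * e = x.1 := x.2

instance {e : A} : SMul A (AeT e) :=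
  ⟨fun a x => ⟨a * x.1, show (a * x.1) * e = a * x.1 by rw [mul_assoc, AeT.memAe]⟩⟩

@[simp] lemma AeT.smul_val {e : A} (a : A) (x : AeT e) : (a • x).1 = a * x.1 := rfl

instance {e : A} : Module A (AeT e) where
  one_smul x := Subtype.ext (one_mul x.1)
  mul_smul a b x := Subtype.ext (mul_assoc a b x.1)
  smul_zero a := Subtype.ext (mul_zero a)
  smul_add a x y := Subtype.ext (mul_add a x.1 y.1)
  add_smul a b x := Subtype.ext (add_mul a b x.1)
  zero_smul x := Subtype.ext (zero_mul x.1)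

instance {e : A} {he : e * e = e} : SMul (Corner e he)ᵐᵒᵖ (AeT e) :=
  ⟨fun c x => ⟨x.1 * c.unop.1,
    show (x.1 * c.unop.1) * e = x.1 * c.unop.1 by rw [mul_assoc, Corner.mem2]⟩⟩

@[simp] lemma AeT.op_smul_val {e : A} {he : e * e = e} (c : (Corner e he)ᵐᵒᵖ) (x : AeT e) :
    (c • x).1 = x.1 * c.unop.1 := rfl

instance {e : A} {he : e * e = e} : Module (Corner e he)ᵐᵒᵖ (AeT e) where
  one_smul x := Subtype.ext (AeT.memAe x)
  mul_smul c d x := Subtype.ext (mul_assoc x.1 d.unop.1 c.unop.1).symm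
  smul_zero c := Subtype.ext (zero_mul c.unop.1)
  smul_add c x y := Subtype.ext (add_mul x.1 y.1 c.unop.1)
  add_smul c d x := Subtype.ext (mul_add x.1 c.unop.1 d.unop.1)
  zero_smul x := Subtype.ext (mul_zero x.1)

instance {e : A} {he : e * e = e} : SMulCommClass A (Corner e he)ᵐᵒᵖ (AeT e) :=
  ⟨fun a c x => Subtype.ext (mul_assoc a x.1 c.unop.1).symm⟩

/-- The set `pAq` as an additive subgroup of `A`. -/
def Mid (p q : A) : AddSubgroup A where
  carrier := {x | p * x = x ∧ x * q = x}
  zero_mem' := by simp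
  add_mem' := by
    rintro a b ⟨h1, h2⟩ ⟨h3, h4⟩
    exact ⟨by rw [mul_add, h1, h3], by rw [add_mul, h2, h4]⟩
  neg_mem' := by
    rintro a ⟨h1, h2⟩
    exact ⟨by rw [mul_neg, h1], by rw [neg_mul, h2]⟩

lemma Mid.mem1 {p q : A} (x : Mid p q) : p * x.1 = x.1 := x.2.1
lemma Mid.mem2 {p q : A} (x : Mid p q) : x.1 * q = x.1 := x.2.2

instance {p q : A} {hp : p * p = p} : SMul (Corner p hp) (Mid p q) :=
  ⟨fun c x => ⟨c.1 * x.1,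
    show p * (c.1 * x.1) = c.1 * x.1 ∧ (c.1 * x.1) * q = c.1 * x.1 from
      ⟨by rw [← mul_assoc, Corner.mem1], by rw [mul_assoc, Mid.mem2]⟩⟩⟩

@[simp] lemma Mid.smul_val {p q : A} {hp : p * p = p} (c : Corner p hp) (x : Mid p q) :
    (c • x).1 = c.1 * x.1 := rfl

instance {p q : A} {hp : p * p = p} : Module (Corner p hp) (Mid p q) where
  one_smul x := Subtype.ext (Mid.mem1 x)
  mul_smul c d x := Subtype.ext (mul_assoc c.1 d.1 x.1)
  smul_zero c := Subtype.ext (mul_zero c.1)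
  smul_add c x y := Subtype.ext (mul_add c.1 x.1 y.1)
  add_smul c d x := Subtype.ext (add_mul c.1 d.1 x.1)
  zero_smul x := Subtype.ext (zero_mul x.1)

instance {p q : A} {hq : q * q = q} : SMul (Corner q hq)ᵐᵒᵖ (Mid p q) :=
  ⟨fun c x => ⟨x.1 * c.unop.1,
    show p * (x.1 * c.unop.1) = x.1 * c.unop.1 ∧ (x.1 * c.unop.1) * q = x.1 * c.unop.1 from
      ⟨by rw [← mul_assoc, Mid.mem1], by rw [mul_assoc, Corner.mem2]⟩⟩⟩

@[simp] lemma Mid.op_smul_val {p q : A} {hq : q * q = q} (c : (Corner q hq)ᵐᵒᵖ) (x : Mid p q) :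
    (c • x).1 = x.1 * c.unop.1 := rfl

instance {p q : A} {hq : q * q = q} : Module (Corner q hq)ᵐᵒᵖ (Mid p q) where
  one_smul x := Subtype.ext (Mid.mem2 x)
  mul_smul c d x := Subtype.ext (mul_assoc x.1 d.unop.1 c.unop.1).symm
  smul_zero c := Subtype.ext (zero_mul c.unop.1)
  smul_add c x y := Subtype.ext (add_mul x.1 y.1 c.unop.1)
  add_smul c d x := Subtype.ext (mul_add x.1 c.unop.1 d.unop.1)
  zero_smul x := Subtype.ext (mul_zero x.1)

instance {p q : A} {hp : p * p = p} {hq : q * q = q} :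
    SMulCommClass (Corner p hp) (Corner q hq)ᵐᵒᵖ (Mid p q) :=
  ⟨fun c d x => Subtype.ext (mul_assoc c.1 x.1 d.unop.1).symm⟩

end Bimod

section Tensor

/-- A balanced biadditive map out of a pair (right `S`-module `X`, left `S`-module `Y`),
`R`-linear in the first variable. -/
structure IsBalancedTensor (R S : Type) [Ring R] [Ring S]
    (X : Type) [AddCommGroup X] [Module R X] [Module Sᵐᵒᵖ X] [SMulCommClass R Sᵐᵒᵖ X]
    (Y : Type) [AddCommGroup Y] [Module S Y]
    (T : Type) [AddCommGroup T] [Module R T]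
    (β : X → Y → T) : Prop where
  add_left : ∀ x x' y, β (x + x') y = β x y + β x' y
  add_right : ∀ x y y', β x (y + y') = β x y + β x y'
  smul_left : ∀ (r : R) x y, β (r • x) y = r • β x y
  balanced : ∀ (s : S) x y, β ((MulOpposite.op s) • x) y = β x (s • y)

/-- `(T, β)` realises the tensor product `X ⊗_S Y` as a left `R`-module:
`β` is balanced and universal among balanced maps. -/
def IsUnivTensor (R S : Type) [Ring R] [Ring S]
    (X : Type) [AddCommGroup X] [Module R X] [Module Sᵐᵒᵖ X] [SMulCommClass R Sᵐᵒᵖ X]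
    (Y : Type) [AddCommGroup Y] [Module S Y]
    (T : Type) [AddCommGroup T] [Module R T]
    (β : X → Y → T) : Prop :=
  IsBalancedTensor R S X Y T β ∧
    ∀ (T' : Type) [AddCommGroup T'] [Module R T'] (β' : X → Y → T'),
      IsBalancedTensor R S X Y T' β' → ∃! φ : T →ₗ[R] T', ∀ x y, φ (β x y) = β' x y

end Tensor

section Localise

variable {A : Type} [Ring A] {e : A} {he : e * e = e}
variable {M N : Type} [AddCommGroup M] [AddCommGroup N] [Module A M] [Module A N]

/-- The localisation functor on morphisms: restriction of `f : M → N` to `eM → eN`. -/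
def cmap (e : A) (he : e * e = e) (f : M →ₗ[A] N) :
    CornerMod e he M →ₗ[Corner e he] CornerMod e he N where
  toFun m := ⟨f m.1, show e • f m.1 = f m.1 by rw [← map_smul, CornerMod.memMod]⟩
  map_add' m n := Subtype.ext (map_add f m.1 n.1)
  map_smul' c m := Subtype.ext (map_smul f c.1 m.1)

@[simp] lemma cmap_val (f : M →ₗ[A] N) (m : CornerMod e he M) :
    (cmap e he f m).1 = f m.1 := rfl

end Localise

/-- Let `A` be an algebra over a field `k` with idempotents `e₁, e₂`
such that the multiplication maps `A eᵢ ⊗_{eᵢAeᵢ} eᵢA → A eᵢ A` are bijective, and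
`0 ⊂ Ae₂A ⊂ Ae₁A ⊂ A` with `e₂ ∈ e₁Ae₁`. Then localisation composes: `e₂(e₁M) = e₂M`
(for every `A`-module `M`, the subset `e₂M ⊆ M` is contained in `e₁M`, with the same
`e₂Ae₂`-action by multiplication); and globalisation composes:
`Ae₂ ⊗_{e₂Ae₂} N ≅ Ae₁ ⊗_{e₁Ae₁} (e₁Ae₂ ⊗_{e₂Ae₂} N)`. -/
theorem stmt10 {k A : Type} [Field k] [Ring A] [Algebra k A]
    (e1 e2 : A) (h1 : e1 * e1 = e1) (h2 : e2 * e2 = e2)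
    (h12 : e1 * e2 * e1 = e2)
    -- the multiplication maps A eᵢ ⊗_{eᵢ A eᵢ} eᵢ A → A eᵢ A are bijective
    (hmult1 : ∀ (T : Type) [AddCommGroup T] [Module A T] (β : AeT e1 → Mid e1 1 → T),
      IsUnivTensor A (Corner e1 h1) (AeT e1) (Mid e1 1) T β →
      ∀ φ : T →ₗ[A] A, (∀ x y, φ (β x y) = x.1 * y.1) →
        Function.Injective φ ∧
          LinearMap.range φ = Submodule.span A {z : A | ∃ b, z = e1 * b})
    (hmult2 : ∀ (T : Type) [AddCommGroup T] [Module A T] (β : AeT e2 → Mid e2 1 → T),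
      IsUnivTensor A (Corner e2 h2) (AeT e2) (Mid e2 1) T β →
      ∀ φ : T →ₗ[A] A, (∀ x y, φ (β x y) = x.1 * y.1) →
        Function.Injective φ ∧
          LinearMap.range φ = Submodule.span A {z : A | ∃ b, z = e2 * b}) :
    -- (i) localisation composes: e₂(e₁ M) = e₂ M
    (∀ (M : Type) [AddCommGroup M] [Module A M],
      (cornerModSub e2 M : Set M) ⊆ (cornerModSub e1 M : Set M)) ∧
    -- (ii) globalisation composes:
    -- Ae₂ ⊗_{e₂Ae₂} N ≅ Ae₁ ⊗_{e₁Ae₁} (e₁Ae₂ ⊗_{e₂Ae₂} N)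
    (∀ (N : Type) [AddCommGroup N] [Module (Corner e2 h2) N]
      (U : Type) [AddCommGroup U] [Module (Corner e1 h1) U]
      (βU : Mid e1 e2 → N → U),
      IsUnivTensor (Corner e1 h1) (Corner e2 h2) (Mid e1 e2) N U βU →
      ∀ (T2 : Type) [AddCommGroup T2] [Module A T2] (β2 : AeT e2 → N → T2),
        IsUnivTensor A (Corner e2 h2) (AeT e2) N T2 β2 →
      ∀ (T1 : Type) [AddCommGroup T1] [Module A T1] (β1 : AeT e1 → U → T1),
        IsUnivTensor A (Corner e1 h1) (AeT e1) U T1 β1 →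
        Nonempty (T2 ≃ₗ[A] T1)) := by
  clear hmult1 hmult2
  have he12 : e1 * e2 = e2 := by
    conv_lhs => rw [← h12]
    rw [← mul_assoc, ← mul_assoc, h1]
    exact h12
  have he21 : e2 * e1 = e2 := by
    conv_lhs => rw [← h12]
    rw [mul_assoc, h1]
    exact h12
  constructor
  · intro M _ _ m hm
    have hm' : e2 • m = m := hm
    show e1 • m = m
    calc e1 • m = e1 • (e2 • m) := by rw [hm']
    _ = (e1 * e2) • m := (mul_smul _ _ _).symm
    _ = e2 • m := by rw [he12]
    _ = m := hm'
  · intro N _ _ U _ _ βU hU T2 _ _ β2 hT2 T1 _ _ β1 hT1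
    -- basic elements
    set E1v : AeT e1 := ⟨e1, h1⟩ with hE1v
    set E2v : Mid e1 e2 := ⟨e2, he12, h2⟩ with hE2v
    -- lift : Ae2 → Ae1
    have hlift : ∀ x : AeT e2, x.1 * e1 = x.1 := by
      intro x
      conv_lhs => rw [← x.2]
      rw [mul_assoc, he21]
      exact x.2
    let lift : AeT e2 → AeT e1 := fun x => ⟨x.1, hlift x⟩
    -- embed corner C2 into C1
    have hC21a : ∀ s : Corner e2 h2, e1 * s.1 = s.1 := by
      intro s
      conv_lhs => rw [← s.2.1]
      rw [← mul_assoc, he12]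
      exact s.2.1
    have hC21b : ∀ s : Corner e2 h2, s.1 * e1 = s.1 := by
      intro s
      conv_lhs => rw [← s.2.2]
      rw [mul_assoc, he21]
      exact s.2.2
    -- Step 1: construct φ : T2 →ₗ[A] T1
    let β' : AeT e2 → N → T1 := fun x n => β1 (lift x) (βU E2v n)
    have hbal' : IsBalancedTensor A (Corner e2 h2) (AeT e2) N T1 β' := by
      constructor
      · intro x x' y
        have : lift (x + x') = lift x + lift x' := Subtype.ext rfl
        rw [show β' (x + x') y = β1 (lift x + lift x') (βU E2v y) by rw [← this]]
        exact hT1.1.add_left _ _ _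
      · intro x y y'
        show β1 (lift x) (βU E2v (y + y')) = _
        rw [hU.1.add_right]
        exact hT1.1.add_right _ _ _
      · intro r x y
        have : lift (r • x) = r • lift x := Subtype.ext rfl
        show β1 (lift (r • x)) (βU E2v y) = _
        rw [this]
        exact hT1.1.smul_left _ _ _
      · intro s x y
        set shat : Corner e1 h1 := ⟨s.1, hC21a s, hC21b s⟩ with hshat
        have h1' : lift (MulOpposite.op s • x) = MulOpposite.op shat • lift x :=
          Subtype.ext rfl
        have h2' : shat • E2v = MulOpposite.op s • E2v := by
          apply Subtype.ext
          show s.1 * e2 = e2 * s.1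
          rw [s.2.2, s.2.1]
        show β1 (lift (MulOpposite.op s • x)) (βU E2v y) = β1 (lift x) (βU E2v (s • y))
        rw [h1', hT1.1.balanced, ← hU.1.smul_left, h2', hU.1.balanced]
    obtain ⟨φ, hφ, -⟩ := hT2.2 T1 β' hbal'
    -- Step 2: ρ : U →ₗ[C1] e1 T2
    let down : Mid e1 e2 → AeT e2 := fun m => ⟨m.1, m.2.2⟩
    have hdownfix : ∀ (m : Mid e1 e2), e1 • down m = down m := by
      intro m; exact Subtype.ext m.2.1
    let δ : Mid e1 e2 → N → CornerMod e1 h1 T2 := fun m n =>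
      ⟨β2 (down m) n, by
        show e1 • β2 (down m) n = β2 (down m) n
        rw [← hT2.1.smul_left, hdownfix]⟩
    have hbalδ : IsBalancedTensor (Corner e1 h1) (Corner e2 h2) (Mid e1 e2) N
        (CornerMod e1 h1 T2) δ := by
      constructor
      · intro x x' y
        apply Subtype.ext
        show β2 (down (x + x')) y = β2 (down x) y + β2 (down x') y
        have : down (x + x') = down x + down x' := Subtype.ext rfl
        rw [this]
        exact hT2.1.add_left _ _ _
      · intro x y y'
        apply Subtype.ext
        exact hT2.1.add_right _ _ _
      · intro c x y
        apply Subtype.ext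
        show β2 (down (c • x)) y = c.1 • β2 (down x) y
        have : down (c • x) = c.1 • down x := Subtype.ext rfl
        rw [this]
        exact hT2.1.smul_left _ _ _
      · intro s x y
        apply Subtype.ext
        show β2 (down (MulOpposite.op s • x)) y = β2 (down x) (s • y)
        have : down (MulOpposite.op s • x) = MulOpposite.op s • down x :=
          Subtype.ext rfl
        rw [this]
        exact hT2.1.balanced _ _ _
    obtain ⟨ρ, hρ, -⟩ := hU.2 (CornerMod e1 h1 T2) δ hbalδ
    -- Step 3: ψ : T1 →ₗ[A] T2
    let β'' : AeT e1 → U → T2 := fun x u => x.1 • (ρ u).1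
    have hbal'' : IsBalancedTensor A (Corner e1 h1) (AeT e1) U T2 β'' := by
      constructor
      · intro x x' y
        show (x.1 + x'.1) • (ρ y).1 = _
        rw [add_smul]
      · intro x y y'
        show x.1 • (ρ (y + y')).1 = _
        rw [map_add]
        show x.1 • ((ρ y).1 + (ρ y').1) = _
        rw [smul_add]
      · intro r x y
        show (r * x.1) • (ρ y).1 = r • (x.1 • (ρ y).1)
        rw [mul_smul]
      · intro c x y
        show (x.1 * c.1) • (ρ y).1 = x.1 • (ρ (c • y)).1
        rw [map_smul]
        show _ = x.1 • (c.1 • (ρ y).1)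
        rw [mul_smul]
    obtain ⟨ψ, hψ, -⟩ := hT1.2 T2 β'' hbal''
    -- Step 4: ψ ∘ φ = id
    have hψφ : ψ.comp φ = LinearMap.id := by
      obtain ⟨χ, -, huniq⟩ := hT2.2 T2 β2 hT2.1
      have h₁ : ∀ x y, (ψ.comp φ) (β2 x y) = β2 x y := by
        intro x n
        show ψ (φ (β2 x n)) = β2 x n
        rw [hφ, hψ]
        show (lift x).1 • (ρ (βU E2v n)).1 = β2 x n
        rw [hρ]
        show x.1 • β2 (down E2v) n = β2 x n
        rw [← hT2.1.smul_left]
        congr 1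
        apply Subtype.ext
        exact x.2
      have h₂ : ∀ x y, (LinearMap.id : T2 →ₗ[A] T2) (β2 x y) = β2 x y := fun _ _ => rfl
      rw [huniq _ h₁, huniq _ h₂]
    -- Step 5: key identity e1 • φ ((ρ u).1) = β1 E1v u
    have hE1vfix : e1 • E1v = E1v := Subtype.ext h1
    have key : ∀ u : U, e1 • φ ((ρ u).1) = β1 E1v u := by
      let τ : U →ₗ[Corner e1 h1] CornerMod e1 h1 T1 :=
        { toFun := fun u => ⟨β1 E1v u, by
            show e1 • β1 E1v u = β1 E1v u
            rw [← hT1.1.smul_left, hE1vfix]⟩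
          map_add' := fun u u' => Subtype.ext (hT1.1.add_right _ _ _)
          map_smul' := fun c u => by
            apply Subtype.ext
            show β1 E1v (c • u) = c.1 • β1 E1v u
            rw [← hT1.1.balanced, ← hT1.1.smul_left]
            congr 1
            apply Subtype.ext
            show e1 * c.1 = c.1 * e1
            rw [c.2.1, c.2.2] }
      let τ' : U →ₗ[Corner e1 h1] CornerMod e1 h1 T1 :=
        { toFun := fun u => ⟨e1 • φ ((ρ u).1), by
            show e1 • (e1 • φ ((ρ u).1)) = _
            rw [← mul_smul, h1]⟩
          map_add' := fun u u' => by
            apply Subtype.ext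
            show e1 • φ ((ρ (u + u')).1) = e1 • φ ((ρ u).1) + e1 • φ ((ρ u').1)
            rw [map_add]
            show e1 • φ ((ρ u).1 + (ρ u').1) = _
            rw [map_add, smul_add]
          map_smul' := fun c u => by
            apply Subtype.ext
            show e1 • φ ((ρ (c • u)).1) = c.1 • (e1 • φ ((ρ u).1))
            rw [map_smul]
            show e1 • φ (c.1 • (ρ u).1) = _
            rw [map_smul, ← mul_smul, ← mul_smul, c.2.1, c.2.2] }
      let γ : Mid e1 e2 → N → CornerMod e1 h1 T1 := fun m n => τ (βU m n)
      have hbalγ : IsBalancedTensor (Corner e1 h1) (Corner e2 h2) (Mid e1 e2) N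
          (CornerMod e1 h1 T1) γ := by
        constructor
        · intro x x' y
          show τ (βU (x + x') y) = _
          rw [hU.1.add_left, map_add]
        · intro x y y'
          show τ (βU x (y + y')) = _
          rw [hU.1.add_right, map_add]
        · intro c x y
          show τ (βU (c • x) y) = _
          rw [hU.1.smul_left, map_smul]
        · intro s x y
          show τ (βU (MulOpposite.op s • x) y) = τ (βU x (s • y))
          rw [hU.1.balanced]
      obtain ⟨σ, -, huniqγ⟩ := hU.2 (CornerMod e1 h1 T1) γ hbalγ
      have hτ : ∀ m n, τ (βU m n) = γ m n := fun _ _ => rfl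
      have hτ' : ∀ m n, τ' (βU m n) = γ m n := by
        intro m n
        apply Subtype.ext
        show e1 • φ ((ρ (βU m n)).1) = β1 E1v (βU m n)
        rw [hρ]
        show e1 • φ (β2 (down m) n) = _
        rw [hφ]
        show e1 • β1 (lift (down m)) (βU E2v n) = _
        rw [← hT1.1.smul_left]
        set mhat : Corner e1 h1 := ⟨m.1, m.2.1, by
          conv_lhs => rw [← m.2.2]
          rw [mul_assoc, he21]
          exact m.2.2⟩ with hmhat
        have hm1 : e1 • lift (down m) = MulOpposite.op mhat • E1v := by
          apply Subtype.ext
          show e1 * m.1 = e1 * m.1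
          rfl
        rw [hm1, hT1.1.balanced]
        congr 1
        rw [← hU.1.smul_left]
        congr 1
        apply Subtype.ext
        show m.1 * e2 = m.1
        exact m.2.2
      have : τ = τ' := by rw [huniqγ τ hτ, huniqγ τ' hτ']
      intro u
      exact (congrArg Subtype.val (congrFun (congrArg DFunLike.coe this.symm) u))
    -- Step 6: φ ∘ ψ = id
    have hφψ : φ.comp ψ = LinearMap.id := by
      obtain ⟨χ, -, huniq⟩ := hT1.2 T1 β1 hT1.1
      have h₁ : ∀ x y, (φ.comp ψ) (β1 x y) = β1 x y := by
        intro x u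
        show φ (ψ (β1 x u)) = β1 x u
        rw [hψ]
        show φ (x.1 • (ρ u).1) = _
        rw [map_smul]
        have hx : x.1 • φ ((ρ u).1) = x.1 • (e1 • φ ((ρ u).1)) := by
          rw [← mul_smul, x.2]
        rw [hx, key]
        rw [← hT1.1.smul_left]
        congr 1
        apply Subtype.ext
        exact x.2
      have h₂ : ∀ x y, (LinearMap.id : T1 →ₗ[A] T1) (β1 x y) = β1 x y := fun _ _ => rfl
      rw [huniq _ h₁, huniq _ h₂]
    exact ⟨LinearEquiv.ofLinear φ ψ hφψ hψφ⟩
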